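/- Let S be a Markov transition kernel on a measurable space (E, ℰ), let ν be a probability measure on E, and let c ∈ (0, 1], η ≥ 0 be such that for every z ∈ E and every A ∈ ℰ, (δ_z S)(A) ≥ c·ν(A) − η. Then for all z₁, z₂ ∈ E, the total variation distance satisfies ‖δ_{z₁} S − δ_{z₂} S‖_{TV} ≤ 2(1 − c + 2η), where ‖μ‖_{TV} denotes the total mass of |μ| for a signed measure μ. -/

import Mathlib

open MeasureTheory ProbabilityTheory Set

/-- Quantitative Dobrushin-type contraction: if a Markov kernel `S` on `(E, ℰ)`
satisfies `(δ_z S)(A) ≥ c ν(A) − η` for all `z` and measurable `A`, for some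
probability measure `ν`, `c ∈ (0,1]` and `η ≥ 0`, then for all `z₁, z₂`,
`‖δ_{z₁} S − δ_{z₂} S‖_TV ≤ 2(1 − c + 2η)`, where the total variation norm of a
signed measure is the total mass of its total variation. -/
theorem stmt_9 {E : Type*} [MeasurableSpace E] (S : Kernel E E) [IsMarkovKernel S]
    (ν : Measure E) [IsProbabilityMeasure ν] (c η : ℝ)
    (hc : c ∈ Set.Ioc (0 : ℝ) 1) (hη : 0 ≤ η)
    (h : ∀ z : E, ∀ A : Set E, MeasurableSet A →
      c * (ν A).toReal - η ≤ ((S z) A).toReal) :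
    ∀ z₁ z₂ : E,
      ((((S z₁).toSignedMeasure - (S z₂).toSignedMeasure).totalVariation)
          Set.univ).toReal ≤ 2 * (1 - c + 2 * η) := by
  intro z₁ z₂
  -- complement sum for probability measures
  have hsum : ∀ (μ : Measure E) [IsProbabilityMeasure μ] (A : Set E), MeasurableSet A →
      (μ A).toReal + (μ Aᶜ).toReal = 1 := by
    intro μ _ A hA
    rw [← ENNReal.toReal_add (measure_ne_top _ _) (measure_ne_top _ _),
      measure_add_measure_compl hA, measure_univ, ENNReal.toReal_one]
  -- key pointwise bound
  have key : ∀ (z z' : E) (A : Set E), MeasurableSet A →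
      ((S z) A).toReal - ((S z') A).toReal ≤ 1 - c + 2 * η := by
    intro z z' A hA
    have h1 := h z' A hA
    have h2 := h z Aᶜ hA.compl
    have h3 := hsum (S z) A hA
    have h4 := hsum ν A hA
    have e : c * (ν Aᶜ).toReal = c - c * (ν A).toReal := by
      have : (ν Aᶜ).toReal = 1 - (ν A).toReal := by linarith
      rw [this]; ring
    linarith
  set s := (S z₁).toSignedMeasure - (S z₂).toSignedMeasure with hs
  obtain ⟨i, hi₁, hi₂, hi₃, hpos, hneg⟩ := s.toJordanDecomposition_spec
  have sval : ∀ (A : Set E), MeasurableSet A →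
      s A = ((S z₁) A).toReal - ((S z₂) A).toReal := by
    intro A hA
    rw [hs, VectorMeasure.sub_apply, Measure.toSignedMeasure_apply_measurable hA,
      Measure.toSignedMeasure_apply_measurable hA]
    rfl
  rw [SignedMeasure.totalVariation, Measure.add_apply, hpos, hneg,
    SignedMeasure.toMeasureOfZeroLE_apply _ hi₂ hi₁ MeasurableSet.univ,
    SignedMeasure.toMeasureOfLEZero_apply _ hi₃ hi₁.compl MeasurableSet.univ]
  rw [← ENNReal.coe_add, ENNReal.coe_toReal, NNReal.coe_add, NNReal.coe_mk, NNReal.coe_mk,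
    Set.inter_univ, Set.inter_univ]
  have b1 : s i ≤ 1 - c + 2 * η := by
    rw [sval i hi₁]; exact key z₁ z₂ i hi₁
  have b2 : -s iᶜ ≤ 1 - c + 2 * η := by
    rw [sval iᶜ hi₁.compl]
    have := key z₂ z₁ iᶜ hi₁.compl
    linarith
  linarith
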